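/- Let l ∈ ℕ with l ≥ 2, let (S_i,+) for i = 1,…,l be countable adequate commutative partial semigroups, and for each i let ⟨x_{i,n}⟩_{n=1}^∞ be an adequate sequence in S_i. Let m, r ∈ ℕ and suppose S_1 × S_2 × … × S_l = D_1 ∪ D_2 ∪ … ∪ D_r. Then there exists j ∈ {1,…,r} such that for each i ∈ {1,…,l−1} there is a product subsystem ⟨y_{i,n}⟩_{n=1}^m of FS(⟨x_{i,n}⟩_{n=1}^∞), and there is an infinite product subsystem ⟨y_{l,n}⟩_{n=1}^∞ of FS(⟨x_{l,n}⟩_{n=1}^∞), such that (×_{i=1}^{l−1} FS(⟨y_{i,n}⟩_{n=1}^m)) × FS(⟨y_{l,n}⟩_{n=1}^∞) ⊆ D_j. -/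

import Mathlib

namespace PS

variable {S : Type*}

/-- Left-to-right sum of a list in a partial semigroup (`none` on the empty list). -/
def listSum (P : S → S → Option S) : List S → Option S
  | [] => none
  | [a] => some a
  | a :: b :: l => (listSum P (b :: l)).bind fun t => P a t

/-- The partial sum `∑_{t ∈ H} y t`, taken in increasing order of the indices. -/
def fsum (P : S → S → Option S) (y : ℕ → S) (H : Finset ℕ) : Option S :=
  listSum P ((H.sort (· ≤ ·)).map y)

/-- Associativity of a partial operation, in the strong (Kleene) sense. -/
def Assoc (P : S → S → Option S) : Prop :=
  ∀ a b c : S, (P a b).bind (fun t => P t c) = (P b c).bind fun t => P a t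

/-- Commutativity: `a + b = b + a` whenever either side is defined. -/
def Comm (P : S → S → Option S) : Prop := ∀ a b : S, P a b = P b a

/-- `φ(s) = {t : s + t is defined}`. -/
def phi (P : S → S → Option S) (s : S) : Set S := {t | (P s t).isSome}

/-- `σ(H) = ⋂_{s ∈ H} φ(s)`. -/
def sigma (P : S → S → Option S) (H : Finset S) : Set S :=
  {t | ∀ s ∈ H, (P s t).isSome = true}

/-- An adequate partial semigroup: `σ(H) ≠ ∅` for all finite nonempty `H`. -/
def Adequate (P : S → S → Option S) : Prop :=
  ∀ H : Finset S, H.Nonempty → (sigma P H).Nonempty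

/-- `FS(⟨x_n⟩_{n=m}^∞)`. -/
def FSfrom (P : S → S → Option S) (x : ℕ → S) (m : ℕ) : Set S :=
  {s | ∃ H : Finset ℕ, H.Nonempty ∧ (∀ n ∈ H, m ≤ n) ∧ fsum P x H = some s}

/-- `FS` of the first `m` terms of a sequence. -/
def FSfin (P : S → S → Option S) (x : ℕ → S) (m : ℕ) : Set S :=
  {s | ∃ H : Finset ℕ, H.Nonempty ∧ H ⊆ Finset.range m ∧ fsum P x H = some s}

/-- An adequate sequence. -/
def AdequateSeq (P : S → S → Option S) (x : ℕ → S) : Prop :=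
  (∀ F : Finset ℕ, F.Nonempty → (fsum P x F).isSome = true) ∧
  (∀ F : Finset S, F.Nonempty → ∃ m : ℕ, FSfrom P x m ⊆ sigma P F)

/-- `δS ⊆ βS`. -/
def deltaS (P : S → S → Option S) : Set (Ultrafilter S) :=
  {p | ∀ s : S, phi P s ∈ p}

/-- `-x + A = {y ∈ φ(x) : x + y ∈ A}`. -/
def shift (P : S → S → Option S) (x : S) (A : Set S) : Set S :=
  {y | ∃ z ∈ A, P x y = some z}

/-- `IsSum P r p q` expresses that `r = p + q` in `δS`:
`A ∈ p + q` iff `{x : -x + A ∈ q} ∈ p`. -/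
def IsSum (P : S → S → Option S) (r p q : Ultrafilter S) : Prop :=
  ∀ A : Set S, A ∈ r ↔ {x : S | shift P x A ∈ q} ∈ p

/-- A finite product subsystem `⟨y_n⟩_{n<m}` of `FS(⟨x_n⟩_{n=k}^∞)`. -/
def IsProdSubsysFin (P : S → S → Option S) (x : ℕ → S) (k m : ℕ) (y : ℕ → S) : Prop :=
  ∃ H : ℕ → Finset ℕ,
    (∀ n < m, (H n).Nonempty) ∧
    (∀ t ∈ H 0, k ≤ t) ∧
    (∀ n, n + 1 < m → ∀ s ∈ H n, ∀ t ∈ H (n + 1), s < t) ∧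
    (∀ n < m, fsum P x (H n) = some (y n))

/-- An infinite product subsystem `⟨y_n⟩_{n=0}^∞` of `FS(⟨x_n⟩_{n=k}^∞)`. -/
def IsProdSubsysInf (P : S → S → Option S) (x : ℕ → S) (k : ℕ) (y : ℕ → S) : Prop :=
  ∃ H : ℕ → Finset ℕ,
    (∀ n, (H n).Nonempty) ∧
    (∀ t ∈ H 0, k ≤ t) ∧
    (∀ n, ∀ s ∈ H n, ∀ t ∈ H (n + 1), s < t) ∧
    (∀ n, fsum P x (H n) = some (y n))

/-- `⟨x_n⟩_{n<m}` is a weak product subsystem of `⟨y_n⟩_{n=k}^∞`, witnessed by `H`. -/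
def IsWPSWith (P : S → S → Option S) (y : ℕ → S) (k m : ℕ) (x : ℕ → S)
    (H : ℕ → Finset ℕ) : Prop :=
  (∀ n < m, (H n).Nonempty) ∧
  (∀ n < m, ∀ t ∈ H n, k ≤ t) ∧
  (∀ n₁ < m, ∀ n₂ < m, n₁ ≠ n₂ → Disjoint (H n₁) (H n₂)) ∧
  (∀ n < m, fsum P y (H n) = some (x n))

/-- `⟨x_n⟩_{n<m}` is a weak product subsystem of `⟨y_n⟩_{n=k}^∞`. -/
def IsWPS (P : S → S → Option S) (y : ℕ → S) (k m : ℕ) (x : ℕ → S) : Prop :=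
  ∃ H : ℕ → Finset ℕ, IsWPSWith P y k m x H

/-- The coordinatewise partial operation on a finite product, defined exactly when
every coordinate operation is defined. -/
def prodOp {l : ℕ} {T : Fin l → Type*} (P : ∀ i, T i → T i → Option (T i)) :
    (∀ i, T i) → (∀ i, T i) → Option (∀ i, T i) := fun a b =>
  if h : ∀ i, (P i (a i) (b i)).isSome then
    some fun i => (P i (a i) (b i)).get (h i)
  else none

end PS

namespace PSAux
open PS
variable {S : Type*} (P : S → S → Option S)

/-- total operation on `Option S`, absorbing `none`. -/
def mop : Option S → Option S → Option S := fun a b => a.bind fun s => b.bind fun t => P s t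

lemma mop_none_left (b : Option S) : mop P none b = none := rfl
lemma mop_none_right (a : Option S) : mop P a none = none := by cases a <;> rfl
lemma mop_some_left (a : S) (z : Option S) : mop P (some a) z = z.bind fun t => P a t := by
  cases z <;> rfl
lemma mop_some_right (z : Option S) (c : S) : mop P z (some c) = z.bind fun s => P s c := by
  cases z <;> rfl

lemma mop_assoc (hP : Assoc P) (a b c : Option S) :
    mop P (mop P a b) c = mop P a (mop P b c) := by
  cases a with
  | none => rfl
  | some a =>
    cases b with
    | none => simp [mop_none_left, mop_none_right]
    | some b =>
      cases c with
      | none => simp [mop_none_right]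
      | some c =>
        have h1 : mop P (some a) (some b) = P a b := rfl
        have h2 : mop P (some b) (some c) = P b c := rfl
        rw [h1, h2, mop_some_right, mop_some_left]
        exact hP a b c

/-- Semigroup structure on `Option S`. -/
def PSem (hP : Assoc P) : Semigroup (Option S) where
  mul := mop P
  mul_assoc := mop_assoc P hP

lemma listSum_cons (a : S) (l : List S) (hl : l ≠ []) :
    listSum P (a :: l) = (listSum P l).bind fun t => P a t := by
  cases l with
  | nil => exact absurd rfl hl
  | cons b l' => rfl

lemma listSum_append (hP : Assoc P) (l₁ l₂ : List S) (h₁ : l₁ ≠ []) (h₂ : l₂ ≠ []) :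
    listSum P (l₁ ++ l₂) = mop P (listSum P l₁) (listSum P l₂) := by
  induction l₁ with
  | nil => exact absurd rfl h₁
  | cons a l ih =>
    by_cases hl : l = []
    · subst hl
      rw [show ([a] ++ l₂) = a :: l₂ from rfl, listSum_cons P a l₂ h₂]
      rw [show listSum P [a] = some a from rfl, mop_some_left]
    · have happ : l ++ l₂ ≠ [] := by simp [hl]
      rw [show ((a :: l) ++ l₂) = a :: (l ++ l₂) from rfl, listSum_cons P a _ happ, ih hl,
        listSum_cons P a l hl, ← mop_some_left, ← mop_some_left, mop_assoc P hP]

lemma fsum_congr {x y : ℕ → S} {H : Finset ℕ} (h : ∀ t ∈ H, x t = y t) :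
    fsum P x H = fsum P y H := by
  unfold fsum
  congr 1
  exact List.map_congr_left fun a ha => h a ((Finset.mem_sort _).mp ha)

lemma fsum_singleton (x : ℕ → S) (k : ℕ) : fsum P x {k} = some (x k) := by
  unfold fsum
  rw [Finset.sort_singleton]
  rfl

lemma sort_nonempty_ne_nil {H : Finset ℕ} (h : H.Nonempty) : H.sort (· ≤ ·) ≠ [] := by
  obtain ⟨a, ha⟩ := h
  intro he
  have := (Finset.mem_sort (α := ℕ) (· ≤ ·)).mpr ha
  rw [he] at this
  exact absurd this List.not_mem_nil

lemma sort_union {H₁ H₂ : Finset ℕ} (hsep : ∀ s ∈ H₁, ∀ t ∈ H₂, s < t) :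
    (H₁ ∪ H₂).sort (· ≤ ·) = H₁.sort (· ≤ ·) ++ H₂.sort (· ≤ ·) := by
  have hdisj : Disjoint H₁ H₂ := by
    rw [Finset.disjoint_left]
    intro a ha1 ha2
    exact lt_irrefl a (hsep a ha1 a ha2)
  apply List.Perm.eq_of_pairwise' (Finset.pairwise_sort _ _) ?_ ?_
  swap
  · rw [← Multiset.coe_eq_coe]
    rw [← Multiset.coe_add]
    simp only [Finset.sort_eq]
    rw [← Finset.disjUnion_eq_union H₁ H₂ hdisj]
    rfl
  · rw [List.pairwise_append]
    refine ⟨Finset.pairwise_sort _ _, Finset.pairwise_sort _ _, ?_⟩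
    intro a ha b hb
    exact le_of_lt (hsep a ((Finset.mem_sort _).mp ha) b ((Finset.mem_sort _).mp hb))

lemma fsum_union (hP : Assoc P) {x : ℕ → S} {H₁ H₂ : Finset ℕ}
    (h₁ : H₁.Nonempty) (h₂ : H₂.Nonempty) (hsep : ∀ s ∈ H₁, ∀ t ∈ H₂, s < t) :
    fsum P x (H₁ ∪ H₂) = mop P (fsum P x H₁) (fsum P x H₂) := by
  unfold fsum
  rw [sort_union hsep, List.map_append]
  exact listSum_append P hP _ _ (by simp [sort_nonempty_ne_nil h₁])
    (by simp [sort_nonempty_ne_nil h₂])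


open Filter in
/-- FP elements of the shifted stream are block sums. -/
lemma fp_block (hP : Assoc P) (x : ℕ → S) :
    ∀ (c : Stream' (Option S)) (z : Option S),
      z ∈ @Hindman.FP _ (PSem P hP) c →
      ∀ k : ℕ, c = Stream'.drop k (fun n => some (x n)) →
      ∃ H : Finset ℕ, H.Nonempty ∧ (∀ t ∈ H, k ≤ t) ∧ fsum P x H = z := by
  letI := PSem P hP
  intro c z hz
  induction hz with
  | head' a =>
    intro k hk
    refine ⟨{k}, Finset.singleton_nonempty k, by simp, ?_⟩
    rw [fsum_singleton, hk]
    exact (Stream'.head_drop (fun n => some (x n) : Stream' (Option S)) k).symm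
  | tail' a m h ih =>
    intro k hk
    obtain ⟨H, h1, h2, h3⟩ := ih (k + 1) (by
      rw [hk]; exact Stream'.drop_drop _ _ _)
    exact ⟨H, h1, fun t ht => le_of_lt (Nat.lt_of_succ_le (h2 t ht)), h3⟩
  | cons' a m h ih =>
    intro k hk
    obtain ⟨H, h1, h2, h3⟩ := ih (k + 1) (by
      rw [hk]; exact Stream'.drop_drop _ _ _)
    refine ⟨insert k H, Finset.insert_nonempty _ _, ?_, ?_⟩
    · intro t ht
      rcases Finset.mem_insert.mp ht with rfl | ht
      · exact le_refl t
      · exact le_of_lt (Nat.lt_of_succ_le (h2 t ht))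
    · have hknot : k ∉ H := fun hx => by have := h2 k hx; omega
      have hsep : ∀ s ∈ ({k} : Finset ℕ), ∀ t ∈ H, s < t := by
        intro s hs t ht
        rw [Finset.mem_singleton] at hs
        subst hs
        exact Nat.lt_of_succ_le (h2 t ht)
      rw [Finset.insert_eq, fsum_union P hP (Finset.singleton_nonempty k) h1 hsep,
        fsum_singleton, h3]
      show mop P (some (x k)) m = a.head * m
      rw [hk]
      exact congrArg (· * m) (Stream'.head_drop (fun n => some (x n) : Stream' (Option S)) k).symm


/-- The combinatorial consequence of idempotence that we use. -/
def IdemLike (U : Ultrafilter (Option S)) : Prop :=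
  ∀ A : Set (Option S), A ∈ U ↔ {z | {w | mop P z w ∈ A} ∈ U} ∈ U

open Filter in
lemma exists_good (hP : Assoc P) (x : ℕ → S) :
    ∃ U : Ultrafilter (Option S), IdemLike P U ∧
      ∀ n : ℕ, {z : Option S | ∃ H : Finset ℕ, H.Nonempty ∧ (∀ t ∈ H, n ≤ t) ∧ fsum P x H = z}
        ∈ U := by
  letI : Semigroup (Option S) := PSem P hP
  letI : Semigroup (Ultrafilter (Option S)) := Ultrafilter.semigroup
  set b : Stream' (Option S) := fun n => some (x n) with hb
  have key : ∃ U : Ultrafilter (Option S), U * U = U ∧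
      ∀ n, ∀ᶠ m in (U : Filter (Option S)), m ∈ Hindman.FP (b.drop n) := by
    let T : Set (Ultrafilter (Option S)) := ⋂ n, { U | ∀ᶠ m in U, m ∈ Hindman.FP (b.drop n) }
    have h := exists_idempotent_in_compact_subsemigroup ?_ T ?_ ?_ ?_
    · rcases h with ⟨U, hU, U_idem⟩
      exact ⟨U, U_idem, fun n => Set.mem_iInter.mp hU n⟩
    · exact Ultrafilter.continuous_mul_left
    · apply IsCompact.nonempty_iInter_of_sequence_nonempty_isCompact_isClosed
      · intro n U hU
        filter_upwards [hU]
        rw [← Stream'.drop_drop, ← Stream'.tail_eq_drop]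
        exact fun m hm => Hindman.FP.tail _ m hm
      · intro n
        exact ⟨pure _, mem_pure.mpr <| Hindman.FP.head _⟩
      · exact (ultrafilter_isClosed_basic _).isCompact
      · intro n
        apply ultrafilter_isClosed_basic
    · exact IsClosed.isCompact (isClosed_iInter fun i => ultrafilter_isClosed_basic _)
    · intro U hU V hV
      rw [Set.mem_iInter] at *
      intro n
      rw [Set.mem_setOf_eq, Ultrafilter.eventually_mul]
      filter_upwards [hU n] with m hm
      obtain ⟨n', hn⟩ := Hindman.FP.mul hm
      filter_upwards [hV (n + n')] with m' hm'
      apply hn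
      simpa only [Stream'.drop_drop] using hm'
  obtain ⟨U, hidem, hfp⟩ := key
  refine ⟨U, ?_, ?_⟩
  · intro A
    have h1 : A ∈ U ↔ A ∈ U * U := by rw [hidem]
    have h2 : A ∈ U * U ↔ {z | {w | z * w ∈ A} ∈ U} ∈ U := by
      have := Ultrafilter.eventually_mul U U (· ∈ A)
      simpa [Filter.Eventually] using this
    rw [h1, h2]
    rfl
  · intro n
    have : Hindman.FP (b.drop n) ∈ U := hfp n
    refine mem_of_superset this ?_
    intro z hz
    exact fp_block P hP x (b.drop n) z hz n rfl


lemma exists_chain {β : Type*} [Nonempty β] (Q : ℕ → (ℕ → β) → Prop)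
    (hloc : ∀ n (v w : ℕ → β), (∀ k, k < n → v k = w k) → Q n v → Q n w)
    (h0 : ∀ v, Q 0 v)
    (hstep : ∀ n v, Q n v → ∃ b, Q (n + 1) (Function.update v n b)) :
    ∃ v : ℕ → β, ∀ n, Q n v := by
  choose f hf using hstep
  let g : (n : ℕ) → {v : ℕ → β // Q n v} :=
    fun n => Nat.rec ⟨fun _ => Classical.arbitrary β, h0 _⟩
      (fun n p => ⟨Function.update p.1 n (f n p.1 p.2), hf n p.1 p.2⟩) n
  have hg : ∀ n, (g (n + 1)).1 = Function.update (g n).1 n (f n (g n).1 (g n).2) := fun n => rfl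
  have hstab : ∀ k m n, k < n → n ≤ m → (g m).1 k = (g n).1 k := by
    intro k m
    induction m with
    | zero => intro n h1 h2; omega
    | succ m ih =>
      intro n h1 h2
      rcases Nat.lt_or_ge n (m + 1) with h | h
      · have : (g (m + 1)).1 k = (g m).1 k := by
          rw [hg m]
          exact Function.update_of_ne (by omega) _ _
        rw [this]
        exact ih n h1 (by omega)
      · have : n = m + 1 := by omega
        subst this
        rfl
  refine ⟨fun k => (g (k + 1)).1 k, fun n => ?_⟩
  apply hloc n (g n).1 _ ?_ (g n).2
  intro k hk
  exact hstab k n (k + 1) (Nat.lt_succ_self k) hk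


open Filter in
theorem coord_main (hP : Assoc P) (x : ℕ → S)
    (hx : ∀ F : Finset ℕ, F.Nonempty → (fsum P x F).isSome = true) :
    ∃ V : Ultrafilter S, ∀ B : Set S, B ∈ V →
      ∃ y : ℕ → S, IsProdSubsysInf P x 0 y ∧ FSfrom P y 0 ⊆ B := by
  obtain ⟨U, hidem, hFS⟩ := exists_good P hP x
  haveI : Nonempty S := ⟨x 0⟩
  have hrange : {z : Option S | ∃ s : S, z = some s} ∈ U := by
    refine Filter.mem_of_superset (hFS 0) ?_
    rintro z ⟨H, hne, -, hsum⟩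
    have hsome := hx H hne
    rw [hsum] at hsome
    exact Option.isSome_iff_exists.mp hsome
  refine ⟨U.map (fun z => z.getD (x 0)), ?_⟩
  intro B hB
  have hBU : {z : Option S | ∃ s ∈ B, z = some s} ∈ U := by
    have h1 : (fun z : Option S => z.getD (x 0)) ⁻¹' B ∈ U := Ultrafilter.mem_map.mp hB
    filter_upwards [h1, hrange] with z hz1 hz2
    rcases hz2 with ⟨s, rfl⟩
    exact ⟨s, by simpa using hz1, rfl⟩
  set A : Set (Option S) := {z : Option S | ∃ s ∈ B, z = some s} with hA
  set As : Set (Option S) := A ∩ {z | {w | mop P z w ∈ A} ∈ U} with hAsdef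
  have hAsU : As ∈ U := Filter.inter_mem hBU ((hidem A).mp hBU)
  have hstar : ∀ z ∈ As, {w | mop P z w ∈ As} ∈ U := by
    rintro z ⟨hzA, hz2⟩
    have h2 : {w | {v | mop P w v ∈ {w' | mop P z w' ∈ A}} ∈ U} ∈ U := (hidem _).mp hz2
    have : {w | mop P z w ∈ As} = {w | mop P z w ∈ A} ∩
        {w | {v | mop P w v ∈ {w' | mop P z w' ∈ A}} ∈ U} := by
      ext w
      simp only [hAsdef, Set.mem_inter_iff, Set.mem_setOf_eq]
      constructor
      · rintro ⟨hw1, hw2⟩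
        refine ⟨hw1, ?_⟩
        convert hw2 using 2
        ext v
        simp only [Set.mem_setOf_eq, mop_assoc P hP]
      · rintro ⟨hw1, hw2⟩
        refine ⟨hw1, ?_⟩
        convert hw2 using 2
        ext v
        simp only [Set.mem_setOf_eq, mop_assoc P hP]
    rw [this]
    exact Filter.inter_mem hz2 h2
  haveI : Nonempty (S × Finset ℕ) := ⟨(x 0, ∅)⟩
  set Q : ℕ → (ℕ → S × Finset ℕ) → Prop := fun n v =>
    (∀ q, q < n → (v q).2.Nonempty) ∧
    (∀ q, q < n → fsum P x (v q).2 = some ((v q).1)) ∧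
    (∀ q q', q < q' → q' < n → ∀ s ∈ (v q).2, ∀ t ∈ (v q').2, s < t) ∧
    (∀ G : Finset ℕ, G.Nonempty → (∀ t ∈ G, t < n) →
      fsum P (fun q => (v q).1) G ∈ As) with hQdef
  have hloc : ∀ n (v w : ℕ → S × Finset ℕ), (∀ k, k < n → v k = w k) → Q n v → Q n w := by
    rintro n v w hvw ⟨c1, c2, c3, c4⟩
    refine ⟨fun q hq => by rw [← hvw q hq]; exact c1 q hq,
      fun q hq => by rw [← hvw q hq]; exact c2 q hq,
      fun q q' h1 h2 => by rw [← hvw q (lt_trans h1 h2), ← hvw q' h2]; exact c3 q q' h1 h2,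
      fun G hGne hGlt => ?_⟩
    have : fsum P (fun q => (w q).1) G = fsum P (fun q => (v q).1) G :=
      fsum_congr P (fun t ht => by rw [hvw t (hGlt t ht)])
    rw [this]
    exact c4 G hGne hGlt
  have h0 : ∀ v, Q 0 v := by
    intro v
    refine ⟨fun q hq => absurd hq (Nat.not_lt_zero q),
      fun q hq => absurd hq (Nat.not_lt_zero q),
      fun q q' h1 h2 => absurd h2 (Nat.not_lt_zero q'),
      fun G hGne hGlt => ?_⟩
    obtain ⟨t, ht⟩ := hGne
    exact absurd (hGlt t ht) (Nat.not_lt_zero t)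
  have hstep : ∀ n v, Q n v → ∃ b, Q (n + 1) (Function.update v n b) := by
    rintro n v ⟨c1, c2, c3, c4⟩
    set N : ℕ := (Finset.range n).sup (fun q => (v q).2.sup id) + 1 with hN
    have hNlt : ∀ q, q < n → ∀ s ∈ (v q).2, s < N := by
      intro q hq s hs
      have h1 : s ≤ (v q).2.sup id := Finset.le_sup (f := id) hs
      have h2 : (v q).2.sup id ≤ (Finset.range n).sup (fun q => (v q).2.sup id) :=
        Finset.le_sup (f := fun q => (v q).2.sup id) (Finset.mem_range.mpr hq)
      omega
    set Gs : Finset (Finset ℕ) := (Finset.range n).powerset.erase ∅ with hGs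
    have hI : (As ∩ {z | ∃ H : Finset ℕ, H.Nonempty ∧ (∀ t ∈ H, N ≤ t) ∧ fsum P x H = z}
        ∩ ⋂ G ∈ (Gs : Set (Finset ℕ)), {w | mop P (fsum P (fun q => (v q).1) G) w ∈ As}) ∈ U := by
      refine Filter.inter_mem (Filter.inter_mem hAsU (hFS N)) ?_
      rw [Filter.biInter_mem (Finset.finite_toSet Gs)]
      intro G hGmem
      have hGne : G.Nonempty := Finset.nonempty_iff_ne_empty.mpr (Finset.ne_of_mem_erase hGmem)
      have hGlt : ∀ t ∈ G, t < n := fun t ht => Finset.mem_range.mp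
        (Finset.mem_powerset.mp (Finset.mem_of_mem_erase hGmem) ht)
      exact hstar _ (c4 G hGne hGlt)
    obtain ⟨w, hw⟩ := Ultrafilter.nonempty_of_mem hI
    obtain ⟨⟨hwAs, hwFS⟩, hwint⟩ := hw
    obtain ⟨Hn, hHne, hHge, hHsum⟩ := hwFS
    obtain ⟨s, hsB, rfl⟩ := hwAs.1
    have hupd1 : ∀ q, q < n → Function.update v n (s, Hn) q = v q :=
      fun q hq => Function.update_of_ne (by omega) _ _
    have hupdn : Function.update v n (s, Hn) n = (s, Hn) := Function.update_self _ _ _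
    refine ⟨(s, Hn), ?_, ?_, ?_, ?_⟩
    · intro q hq
      rcases Nat.lt_or_ge q n with h | h
      · rw [hupd1 q h]; exact c1 q h
      · have : q = n := by omega
        subst this
        rw [hupdn]
        exact hHne
    · intro q hq
      rcases Nat.lt_or_ge q n with h | h
      · rw [hupd1 q h]; exact c2 q h
      · have : q = n := by omega
        subst this
        rw [hupdn]
        exact hHsum
    · intro q q' h1 h2 s' hs' t ht
      rcases Nat.lt_or_ge q' n with h | h
      · rw [hupd1 q (lt_trans h1 h), hupd1 q' h] at *
        exact c3 q q' h1 h s' hs' t ht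
      · have hq' : q' = n := by omega
        subst hq'
        rw [hupd1 q h1] at hs'
        rw [hupdn] at ht
        have := hNlt q h1 s' hs'
        have := hHge t ht
        omega
    · intro G hGne hGlt
      by_cases hnG : n ∈ G
      · have hyn : (Function.update v n (s, Hn) n).1 = s := by rw [hupdn]
        set G' := G.erase n with hG'def
        have hG'lt : ∀ t ∈ G', t < n := by
          intro t ht
          have h1 := Finset.mem_of_mem_erase ht
          have h2 := Finset.ne_of_mem_erase ht
          have := hGlt t h1
          omega
        rcases G'.eq_empty_or_nonempty with hG'e | hG'ne
        · have hGsing : G = {n} := by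
            apply Finset.eq_singleton_iff_unique_mem.mpr
            refine ⟨hnG, fun t ht => ?_⟩
            by_contra hne2
            have : t ∈ G' := Finset.mem_erase.mpr ⟨hne2, ht⟩
            rw [hG'e] at this
            exact absurd this (Finset.notMem_empty t)
          rw [hGsing, fsum_singleton, hyn]
          exact hwAs
        · have hGsplit : G = G' ∪ {n} := by
            rw [Finset.union_comm, ← Finset.insert_eq, hG'def, Finset.insert_erase hnG]
          have hsep : ∀ a ∈ G', ∀ b ∈ ({n} : Finset ℕ), a < b := by
            intro a ha b hb
            rw [Finset.mem_singleton] at hb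
            subst hb
            exact hG'lt a ha
          rw [hGsplit, fsum_union P hP hG'ne (Finset.singleton_nonempty n) hsep,
            fsum_singleton, hyn]
          have hcong : fsum P (fun q => (Function.update v n (s, Hn) q).1) G'
              = fsum P (fun q => (v q).1) G' :=
            fsum_congr P (fun t ht => by rw [hupd1 t (hG'lt t ht)])
          rw [hcong]
          have hG'mem : G' ∈ Gs := by
            rw [hGs]
            refine Finset.mem_erase.mpr ⟨?_, ?_⟩
            · exact Finset.nonempty_iff_ne_empty.mp hG'ne
            · exact Finset.mem_powerset.mpr (fun t ht => Finset.mem_range.mpr (hG'lt t ht))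
          have := Set.mem_iInter₂.mp hwint G' hG'mem
          exact this
      · have hGlt' : ∀ t ∈ G, t < n := by
          intro t ht
          have := hGlt t ht
          rcases Nat.lt_or_ge t n with h | h
          · exact h
          · have : t = n := by omega
            subst this
            exact absurd ht hnG
        have hcong : fsum P (fun q => (Function.update v n (s, Hn) q).1) G
            = fsum P (fun q => (v q).1) G :=
          fsum_congr P (fun t ht => by rw [hupd1 t (hGlt' t ht)])
        rw [hcong]
        exact c4 G hGne hGlt'
  obtain ⟨v, hvQ⟩ := exists_chain Q hloc h0 hstep
  refine ⟨fun n => (v n).1, ⟨fun n => (v n).2, fun n => (hvQ (n + 1)).1 n (Nat.lt_succ_self n),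
    fun t _ => Nat.zero_le t,
    fun n s hs t ht => (hvQ (n + 2)).2.2.1 n (n + 1) (Nat.lt_succ_self n) (by omega) s hs t ht,
    fun n => (hvQ (n + 1)).2.1 n (Nat.lt_succ_self n)⟩, ?_⟩
  rintro s' ⟨G, hGne, -, hGsum⟩
  have hlt : ∀ t ∈ G, t < G.sup id + 1 := fun t ht => Nat.lt_succ_of_le (Finset.le_sup (f := id) ht)
  have hmem := (hvQ (G.sup id + 1)).2.2.2 G hGne hlt
  rw [show fsum P (fun q => (v q).1) G = fsum P (fun n => (v n).1) G from rfl, hGsum] at hmem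
  obtain ⟨s0, hs0B, heq⟩ := hmem.1
  obtain rfl : s' = s0 := Option.some.inj heq
  exact hs0B


lemma inf_to_fin {x y : ℕ → S} {m : ℕ} (h : IsProdSubsysInf P x 0 y) :
    IsProdSubsysFin P x 0 m y := by
  obtain ⟨H, h1, h2, h3, h4⟩ := h
  exact ⟨H, fun n _ => h1 n, h2, fun n _ => h3 n, fun n _ => h4 n⟩

lemma fsfin_subset_fsfrom (y : ℕ → S) (m : ℕ) : FSfin P y m ⊆ FSfrom P y 0 := by
  rintro s ⟨H, h1, h2, h3⟩
  exact ⟨H, h1, fun n _ => Nat.zero_le n, h3⟩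

lemma fsfin_finite (y : ℕ → S) (m : ℕ) : (FSfin P y m).Finite := by
  have hsub : FSfin P y m ⊆
      ⋃ H ∈ ((Finset.range m).powerset : Finset (Finset ℕ)), {s | fsum P y H = some s} := by
    rintro s ⟨H, h1, h2, h3⟩
    exact Set.mem_biUnion (Finset.mem_coe.mpr (Finset.mem_powerset.mpr h2)) h3
  refine Set.Finite.subset ?_ hsub
  refine Set.Finite.biUnion (Finset.finite_toSet _) ?_
  intro H _
  apply Set.Subsingleton.finite
  intro a ha b hb
  simp only [Set.mem_setOf_eq] at ha hb
  rw [ha] at hb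
  exact Option.some.inj hb

end PSAux


/-- If `S_1 × ⋯ × S_l = D_1 ∪ ⋯ ∪ D_r` (with `l ≥ 2`), then some `D_j`
contains a product `FS(⟨y_{1,n}⟩_{n=1}^m) × ⋯ × FS(⟨y_{l-1,n}⟩_{n=1}^m) × FS(⟨y_{l,n}⟩_{n=1}^∞)`
where each `⟨y_{i,n}⟩_{n=1}^m` (for `i < l`) is a product subsystem of
`FS(⟨x_{i,n}⟩_{n=1}^∞)` and `⟨y_{l,n}⟩_{n=1}^∞` is an infinite product subsystem of
`FS(⟨x_{l,n}⟩_{n=1}^∞)`. -/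
theorem statement3 {l : ℕ} (hl : 2 ≤ l) {S : Fin l → Type*} [∀ i, Countable (S i)]
    (P : ∀ i, S i → S i → Option (S i))
    (hassoc : ∀ i, PS.Assoc (P i)) (hcomm : ∀ i, PS.Comm (P i))
    (hadeq : ∀ i, PS.Adequate (P i))
    (x : ∀ i, ℕ → S i) (hx : ∀ i, PS.AdequateSeq (P i) (x i))
    (m r : ℕ) (D : Fin r → Set (∀ i, S i)) (hD : (⋃ j, D j) = Set.univ) :
    ∃ j : Fin r, ∃ y : ∀ i, ℕ → S i,
      (∀ i : Fin l, (i : ℕ) < l - 1 → PS.IsProdSubsysFin (P i) (x i) 0 m (y i)) ∧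
      PS.IsProdSubsysInf (P ⟨l - 1, Nat.sub_lt (Nat.lt_of_lt_of_le Nat.zero_lt_two hl) Nat.one_pos⟩) (x ⟨l - 1, Nat.sub_lt (Nat.lt_of_lt_of_le Nat.zero_lt_two hl) Nat.one_pos⟩) 0
        (y ⟨l - 1, Nat.sub_lt (Nat.lt_of_lt_of_le Nat.zero_lt_two hl) Nat.one_pos⟩) ∧
      {f : ∀ i, S i |
          (∀ i : Fin l, (i : ℕ) < l - 1 → f i ∈ PS.FSfin (P i) (y i) m) ∧
          f ⟨l - 1, Nat.sub_lt (Nat.lt_of_lt_of_le Nat.zero_lt_two hl) Nat.one_pos⟩ ∈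
            PS.FSfrom (P ⟨l - 1, Nat.sub_lt (Nat.lt_of_lt_of_le Nat.zero_lt_two hl) Nat.one_pos⟩) (y ⟨l - 1, Nat.sub_lt (Nat.lt_of_lt_of_le Nat.zero_lt_two hl) Nat.one_pos⟩) 0} ⊆ D j := by
  classical
  set lastIdx : Fin l := ⟨l - 1, Nat.sub_lt (Nat.lt_of_lt_of_le Nat.zero_lt_two hl) Nat.one_pos⟩
    with hlastIdx
  have hcoord : ∀ i : Fin l, ∃ V : Ultrafilter (S i), ∀ B : Set (S i), B ∈ V →
      ∃ y : ℕ → S i, PS.IsProdSubsysInf (P i) (x i) 0 y ∧ PS.FSfrom (P i) y 0 ⊆ B :=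
    fun i => PSAux.coord_main (P i) (hassoc i) (x i) (hx i).1
  choose V hV using hcoord
  set x₀ : ∀ i, S i := fun i => x i 0 with hx₀
  set W : ℕ → Ultrafilter (∀ i, S i) := fun d =>
    Nat.rec (pure x₀)
      (fun d Wd => if h : d < l then
        Ultrafilter.bind (V ⟨l - d - 1, by omega⟩)
          (fun a => Ultrafilter.map (fun f => Function.update f ⟨l - d - 1, by omega⟩ a) Wd)
      else Wd) d with hW
  have hWsucc : ∀ d, ∀ h : d < l, W (d + 1) =
      Ultrafilter.bind (V ⟨l - d - 1, by omega⟩)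
        (fun a => Ultrafilter.map (fun f => Function.update f ⟨l - d - 1, by omega⟩ a) (W d)) := by
    intro d h
    show (if h : d < l then _ else _) = _
    rw [dif_pos h]
  have claim : ∀ d, d ≤ l → ∀ A : Set (∀ i, S i), A ∈ W d →
      ∃ y : ∀ i, ℕ → S i,
        (∀ i : Fin l, l - d ≤ (i : ℕ) → (i : ℕ) < l - 1 →
          PS.IsProdSubsysFin (P i) (x i) 0 m (y i)) ∧
        (l - d ≤ l - 1 → PS.IsProdSubsysInf (P lastIdx) (x lastIdx) 0 (y lastIdx)) ∧
        (∀ f : ∀ i, S i, (∀ i : Fin l, (i : ℕ) < l - d → f i = x₀ i) →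
          (∀ i : Fin l, l - d ≤ (i : ℕ) → (i : ℕ) < l - 1 → f i ∈ PS.FSfin (P i) (y i) m) →
          (l - d ≤ l - 1 → f lastIdx ∈ PS.FSfrom (P lastIdx) (y lastIdx) 0) → f ∈ A) := by
    intro d
    induction d with
    | zero =>
      intro _ A hA
      refine ⟨fun i => x i, fun i hi1 hi2 => absurd hi1 (by omega),
        fun h => absurd h (by omega), fun f hf _ _ => ?_⟩
      have hfx : f = x₀ := funext fun i => hf i (by omega)
      rw [hfx]
      exact Ultrafilter.mem_pure.mp hA
    | succ d ih =>
      intro hd1 A hA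
      have hdl : d < l := by omega
      set k : Fin l := ⟨l - d - 1, by omega⟩ with hk
      rw [hWsucc d hdl] at hA
      have hB : {a : S k | (fun f => Function.update f k a) ⁻¹' A ∈ W d} ∈ V k := by
        have h1 : {a : S k | A ∈ Ultrafilter.map (fun f => Function.update f k a) (W d)}
            ∈ V k := hA
        refine Filter.mem_of_superset h1 ?_
        intro a ha
        exact Ultrafilter.mem_map.mp ha
      obtain ⟨yk, hyk_inf, hyk_sub⟩ := hV k _ hB
      by_cases hd0 : d = 0
      · subst hd0
        have hkk : k = lastIdx := rfl
        refine ⟨Function.update (fun i => x i) lastIdx yk, ?_, ?_, ?_⟩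
        · intro i hi1 hi2
          omega
        · intro _
          rw [Function.update_self]
          exact hyk_inf
        · intro f hf1 hf2 hf3
          have hfl : f lastIdx ∈ PS.FSfrom (P lastIdx) yk 0 := by
            have h2 := hf3 (by omega)
            rwa [Function.update_self] at h2
          have hfB : (fun g => Function.update g k (f lastIdx)) ⁻¹' A ∈ W 0 := hyk_sub hfl
          have hup : Function.update x₀ lastIdx (f lastIdx) ∈ A := Ultrafilter.mem_pure.mp hfB
          have hfeq : f = Function.update x₀ lastIdx (f lastIdx) := by
            funext i
            by_cases hi : i = lastIdx
            · subst hi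
              rw [Function.update_self]
            · rw [Function.update_of_ne hi]
              apply hf1
              have hne : (i : ℕ) ≠ l - 1 := fun hh => hi (Fin.ext hh)
              have := i.isLt
              omega
          rw [hfeq]
          exact hup
      · have hk_lt : (k : ℕ) < l - 1 := by
          show l - d - 1 < l - 1
          omega
        have hfin : (PS.FSfin (P k) yk m).Finite := PSAux.fsfin_finite _ _ _
        set A' : Set (∀ i, S i) :=
          ⋂ a ∈ PS.FSfin (P k) yk m, (fun f => Function.update f k a) ⁻¹' A with hA'
        have hA'W : A' ∈ W d := by
          refine (Filter.biInter_mem hfin).mpr ?_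
          intro a ha
          exact hyk_sub (PSAux.fsfin_subset_fsfrom _ _ _ ha)
        obtain ⟨y', hy'1, hy'2, hy'3⟩ := ih (by omega) A' hA'W
        have hlk : lastIdx ≠ k := by
          intro hh
          have := congrArg Fin.val hh
          simp only [hlastIdx, hk] at this
          omega
        refine ⟨Function.update y' k yk, ?_, ?_, ?_⟩
        · intro i hi1 hi2
          by_cases hik : i = k
          · subst hik
            rw [Function.update_self]
            exact PSAux.inf_to_fin _ hyk_inf
          · rw [Function.update_of_ne hik]
            refine hy'1 i ?_ hi2
            have hne : (i : ℕ) ≠ l - d - 1 := fun hh => hik (Fin.ext hh)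
            have hge : l - (d + 1) ≤ (i : ℕ) := hi1
            omega
        · intro _
          rw [Function.update_of_ne hlk]
          exact hy'2 (by omega)
        · intro f hf1 hf2 hf3
          have haF : f k ∈ PS.FSfin (P k) yk m := by
            have h2 := hf2 k (by show l - (d+1) ≤ l - d - 1; omega) hk_lt
            rwa [Function.update_self] at h2
          have hg : Function.update f k (x₀ k) ∈ A' := by
            apply hy'3
            · intro i hi
              by_cases hik : i = k
              · subst hik
                rw [Function.update_self]
              · rw [Function.update_of_ne hik]
                apply hf1
                have hne : (i : ℕ) ≠ l - d - 1 := fun hh => hik (Fin.ext hh)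
                have hlt : (i : ℕ) < l - d := hi
                omega
            · intro i hi1 hi2
              have hik : i ≠ k := by
                intro hh
                subst hh
                have : l - d ≤ l - d - 1 := hi1
                omega
              rw [Function.update_of_ne hik]
              have h2 := hf2 i (by omega) hi2
              rwa [Function.update_of_ne hik] at h2
            · intro hll
              rw [Function.update_of_ne hlk]
              have h2 := hf3 (by omega)
              rwa [Function.update_of_ne hlk] at h2
          have hmem := Set.mem_iInter₂.mp hg (f k) haF
          have hfe : Function.update (Function.update f k (x₀ k)) k (f k) = f := by
            rw [Function.update_idem, Function.update_eq_self]
          have hmem2 : Function.update (Function.update f k (x₀ k)) k (f k) ∈ A := hmem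
          rwa [hfe] at hmem2
  have hWl : (⋃ j, D j) ∈ W l := by
    rw [hD]
    exact Filter.univ_mem
  rw [← Set.biUnion_univ] at hWl
  obtain ⟨j, -, hDj⟩ := (Ultrafilter.finite_biUnion_mem_iff Set.finite_univ).mp hWl
  obtain ⟨y, hy1, hy2, hy3⟩ := claim l (le_refl l) (D j) hDj
  refine ⟨j, y, fun i hi => hy1 i (by omega) hi, hy2 (by omega), ?_⟩
  rintro f ⟨hf1, hf2⟩
  exact hy3 f (fun i hi => absurd hi (by omega)) (fun i _ hi => hf1 i hi) (fun _ => hf2)
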